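/- Let K be a field of characteristic zero, M a lattice, P = σ∨ ∩ M the monoid of lattice points of the dual of a finitely generated cone σ with extremal ray primitive generators v₁, …, v_k, and let A = K[P] be the monoid algebra with basis {χ^m : m ∈ P}. Let e ∈ M be a Demazure root with distinguished ray ρ_j (⟨e,v_j⟩ = −1, ⟨e,v_i⟩ ≥ 0 for i ≠ j). Then the K-linear map ∂_e defined on basis elements by ∂_e(χ^m) = ⟨m, v_j⟩ · χ^{m+e} is a well-defined derivation of A. -/

import Mathlib

open AddMonoidAlgebra

/-- The map `∂_e(χ^m) = ⟨m, v_j⟩ χ^{m+e}` attached to a Demazure root `e` is a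
well-defined `K`-linear derivation of the monoid algebra `K[P]`, `P = σ∨ ∩ M`. -/
theorem demazure_root_derivation
    {K : Type*} [Field K] [CharZero K]
    {M : Type*} [AddCommGroup M] [Module.Free ℤ M] [Module.Finite ℤ M]
    {k : ℕ} (v : Fin k → (M →ₗ[ℤ] ℤ)) (j : Fin k) (e : M)
    (he₁ : v j e = -1) (he₂ : ∀ i ≠ j, 0 ≤ v i e)
    (P : AddSubmonoid M) (hP : ∀ m : M, m ∈ P ↔ ∀ i, 0 ≤ v i m) :
    ∃ D : AddMonoidAlgebra K P →ₗ[K] AddMonoidAlgebra K P,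
      (∀ m : P,
        (v j (m : M) = 0 → D (AddMonoidAlgebra.single m 1) = 0) ∧
        (∀ h : (m : M) + e ∈ P,
          D (AddMonoidAlgebra.single m 1)
            = ((v j (m : M) : K)) • AddMonoidAlgebra.single (⟨(m : M) + e, h⟩ : P) (1 : K))) ∧
      (∀ a b : AddMonoidAlgebra K P, D (a * b) = a * D b + b * D a) := by
  classical
  have hmem : ∀ m : P, v j (m : M) ≠ 0 → (m : M) + e ∈ P := by
    intro m hm
    rw [hP]
    intro i
    rw [map_add]
    by_cases hij : i = j
    · rw [hij]
      have h0 : 0 ≤ v j (m : M) := (hP _).1 m.2 j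
      have := he₁
      omega
    · have h1 := he₂ i hij
      have h0 : 0 ≤ v i (m : M) := (hP _).1 m.2 i
      omega
  set sg : P → K → AddMonoidAlgebra K P := fun m c => AddMonoidAlgebra.single m c with hsg
  have sg_mul : ∀ (a b : P) (c d : K), sg a c * sg b d = sg (a + b) (c * d) := by
    intro a b c d
    exact AddMonoidAlgebra.single_mul_single _ _ _ _
  set g : P → AddMonoidAlgebra K P := fun m =>
    if h : (m : M) + e ∈ P then ((v j (m : M) : K)) • sg (⟨(m : M) + e, h⟩ : P) 1 else 0
    with hg
  set D : AddMonoidAlgebra K P →ₗ[K] AddMonoidAlgebra K P :=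
    (Finsupp.lsum K (fun m => LinearMap.toSpanSingleton K _ (g m))).comp
      (AddMonoidAlgebra.coeffLinearEquiv K).toLinearMap with hD
  have hDsingle : ∀ (m : P) (c : K), D (sg m c) = c • g m := by
    intro m c
    rw [hD]
    exact Finsupp.lsum_single K _ _ _
  have hgzero : ∀ m : P, v j (m : M) = 0 → g m = 0 := by
    intro m h0
    by_cases h : (m : M) + e ∈ P <;> simp [hg, h, h0]
  have hgmem : ∀ (m : P) (h : (m : M) + e ∈ P),
      g m = ((v j (m : M) : K)) • sg (⟨(m : M) + e, h⟩ : P) 1 := by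
    intro m h
    simp [hg, h]
  refine ⟨D, ?_, ?_⟩
  · intro m
    refine ⟨fun h0 => ?_, fun h => ?_⟩
    · have := hDsingle m 1
      rw [hgzero m h0, smul_zero] at this
      exact this
    · have := hDsingle m 1
      rw [hgmem m h, one_smul] at this
      exact this
  · have key : ∀ (m m' : P) (c c' : K),
        D (sg m c * sg m' c') = sg m c * D (sg m' c') + sg m' c' * D (sg m c) := by
      intro m m' c c'
      rw [sg_mul, hDsingle, hDsingle, hDsingle]
      have hsum : v j ((m + m' : P) : M) = v j (m : M) + v j (m' : M) := by
        push_cast [map_add]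
        ring
      have sg_smul : ∀ (x : K) (p : P) (c : K), x • sg p c = sg p (x * c) := by
        intro x p c
        simp [hsg, Finsupp.smul_single, smul_eq_mul]
      have sg_add : ∀ (p : P) (a b : K), sg p a + sg p b = sg p (a + b) := by
        intro p a b
        simp [hsg, Finsupp.single_add]
      have h0m : 0 ≤ v j (m : M) := (hP _).1 m.2 j
      have h0m' : 0 ≤ v j (m' : M) := (hP _).1 m'.2 j
      by_cases hm : v j (m : M) = 0
      · by_cases hm' : v j (m' : M) = 0
        · rw [hgzero m hm, hgzero m' hm', hgzero (m + m') (by omega)]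
          simp
        · have h1 : (m' : M) + e ∈ P := hmem m' hm'
          have h2 : ((m + m' : P) : M) + e ∈ P := hmem _ (by omega)
          rw [hgzero m hm, hgmem m' h1, hgmem _ h2]
          have hEq : (m + (⟨(m' : M) + e, h1⟩ : P) : P) = (⟨((m + m' : P) : M) + e, h2⟩ : P) := by
            apply Subtype.ext
            push_cast
            abel
          simp only [smul_zero, mul_zero, add_zero, mul_smul_comm, sg_mul, smul_smul]
          rw [hEq]
          simp only [sg_smul, mul_one]
          congr 1
          rw [hsum, hm]
          push_cast
          ring
      · have h1 : (m : M) + e ∈ P := hmem m hm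
        have h2 : ((m + m' : P) : M) + e ∈ P := hmem _ (by omega)
        by_cases hm' : v j (m' : M) = 0
        · rw [hgzero m' hm', hgmem m h1, hgmem _ h2]
          have hEq : (m' + (⟨(m : M) + e, h1⟩ : P) : P) = (⟨((m + m' : P) : M) + e, h2⟩ : P) := by
            apply Subtype.ext
            push_cast
            abel
          simp only [smul_zero, mul_zero, add_zero, zero_add, mul_smul_comm, sg_mul, smul_smul]
          rw [hEq]
          simp only [sg_smul, mul_one]
          congr 1
          rw [hsum, hm']
          push_cast
          ring
        · have h1' : (m' : M) + e ∈ P := hmem m' hm'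
          rw [hgmem m h1, hgmem m' h1', hgmem _ h2]
          have hEq : (m + (⟨(m' : M) + e, h1'⟩ : P) : P) = (⟨((m + m' : P) : M) + e, h2⟩ : P) := by
            apply Subtype.ext; push_cast; abel
          have hEq' : (m' + (⟨(m : M) + e, h1⟩ : P) : P) = (⟨((m + m' : P) : M) + e, h2⟩ : P) := by
            apply Subtype.ext; push_cast; abel
          simp only [mul_smul_comm, sg_mul, smul_smul]
          rw [hEq, hEq']
          simp only [sg_smul, mul_one]
          rw [sg_add]
          congr 1
          rw [hsum]
          push_cast
          ring
    intro a b
    induction a using AddMonoidAlgebra.induction_linear with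
    | zero => simp
    | add a1 a2 ih1 ih2 =>
        rw [add_mul, map_add, ih1, ih2, add_mul, map_add]
        ring
    | single m c =>
        induction b using AddMonoidAlgebra.induction_linear with
        | zero => simp
        | add b1 b2 ih1 ih2 =>
            rw [mul_add, map_add, ih1, ih2, map_add, mul_add, add_mul]
            ring
        | single m' c' => exact key m m' c c'
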